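/- arXiv:1507.01360 — 3 statements merged into one kernel-verified Lean document; each statement's English description precedes it below -/
import Mathlib

section
/- Let N ≥ 2, let λ₁ < λ₂ ≤ 0, V : (0,∞) → ℝ continuous, and let η₁, η₂ ∈ C²((0,∞)) be nonnegative, not identically zero, solutions of −η_i'' − ((N−1)/r)η_i' − V(r)η_i = λ_i η_i / r² on (0,∞). Suppose η₁ > 0 on (0,∞) and that the boundary terms vanish along sequences r_n → 0, R_n → ∞: r_n^{N-1}(η₁η₂' − η₂η₁')(r_n) → 0 and R_n^{N-1}(η₁η₂' − η₂η₁')(R_n) → 0, and ∫_0^∞ η₁(r)η₂(r) r^{N-3} dr < ∞ and is positive. Then λ₁ = λ₂ (contradiction); i.e., no such pair with λ₁ ≠ λ₂ exists. -/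
open Real Filter MeasureTheory

/-- two nonnegative nontrivial radial solutions of the weighted
eigenvalue equation with distinct nonpositive eigenvalues, vanishing Wronskian
boundary terms and positive finite interaction integral, cannot coexist. -/
theorem stmt8 (N : ℕ) (hN : 2 ≤ N) (lam₁ lam₂ : ℝ)
    (hlam : lam₁ < lam₂) (hlam2 : lam₂ ≤ 0)
    (V η₁ η₂ : ℝ → ℝ)
    (hV : ContinuousOn V (Set.Ioi 0))
    (hη₁C2 : ContDiffOn ℝ 2 η₁ (Set.Ioi 0))
    (hη₂C2 : ContDiffOn ℝ 2 η₂ (Set.Ioi 0))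
    (hη₂nonneg : ∀ r ∈ Set.Ioi (0 : ℝ), 0 ≤ η₂ r)
    (hη₂ne : ∃ r ∈ Set.Ioi (0 : ℝ), η₂ r ≠ 0)
    (hη₁pos : ∀ r ∈ Set.Ioi (0 : ℝ), 0 < η₁ r)
    (heq₁ : ∀ r ∈ Set.Ioi (0 : ℝ),
      -deriv (deriv η₁) r - ((N : ℝ) - 1) / r * deriv η₁ r - V r * η₁ r
        = lam₁ * η₁ r / r ^ 2)
    (heq₂ : ∀ r ∈ Set.Ioi (0 : ℝ),
      -deriv (deriv η₂) r - ((N : ℝ) - 1) / r * deriv η₂ r - V r * η₂ r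
        = lam₂ * η₂ r / r ^ 2)
    (rn Rn : ℕ → ℝ)
    (hrn_pos : ∀ n, 0 < rn n)
    (hrn : Tendsto rn atTop (nhds 0))
    (hRn : Tendsto Rn atTop atTop)
    (hW0 : Tendsto (fun n => rn n ^ (N - 1) *
        (η₁ (rn n) * deriv η₂ (rn n) - η₂ (rn n) * deriv η₁ (rn n)))
      atTop (nhds 0))
    (hWinf : Tendsto (fun n => Rn n ^ (N - 1) *
        (η₁ (Rn n) * deriv η₂ (Rn n) - η₂ (Rn n) * deriv η₁ (Rn n)))
      atTop (nhds 0))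
    (hint : IntegrableOn (fun r => η₁ r * η₂ r * r ^ ((N : ℝ) - 3))
      (Set.Ioi (0 : ℝ)))
    (hpos : 0 < ∫ r in Set.Ioi (0 : ℝ), η₁ r * η₂ r * r ^ ((N : ℝ) - 3)) :
    False := by
  set f : ℝ → ℝ := fun r => η₁ r * η₂ r * r ^ ((N : ℝ) - 3) with hf
  set W : ℝ → ℝ := fun r => r ^ (N - 1) *
      (η₁ r * deriv η₂ r - η₂ r * deriv η₁ r) with hWdef
  set c : ℝ := lam₁ - lam₂ with hc
  have hcneg : c < 0 := by simp [hc]; linarith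
  have hopen : IsOpen (Set.Ioi (0:ℝ)) := isOpen_Ioi
  -- continuity of f on Ioi 0
  have hη₁cont : ContinuousOn η₁ (Set.Ioi 0) := hη₁C2.continuousOn
  have hη₂cont : ContinuousOn η₂ (Set.Ioi 0) := hη₂C2.continuousOn
  have hrpow : ContinuousOn (fun r : ℝ => r ^ ((N : ℝ) - 3)) (Set.Ioi 0) :=
    ContinuousOn.rpow_const continuousOn_id (fun x hx => Or.inl (ne_of_gt hx))
  have hfcont : ContinuousOn f (Set.Ioi 0) := (hη₁cont.mul hη₂cont).mul hrpow
  -- derivative of W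
  have key : ∀ r ∈ Set.Ioi (0:ℝ), HasDerivAt W (c * f r) r := by
    intro r hr
    have hr0 : (0:ℝ) < r := hr
    have hrne : r ≠ 0 := ne_of_gt hr0
    have hd₁ : HasDerivAt η₁ (deriv η₁ r) r :=
      ((hη₁C2.differentiableOn two_ne_zero).differentiableAt
        (hopen.mem_nhds hr)).hasDerivAt
    have hd₂ : HasDerivAt η₂ (deriv η₂ r) r :=
      ((hη₂C2.differentiableOn two_ne_zero).differentiableAt
        (hopen.mem_nhds hr)).hasDerivAt
    have hC1 : ContDiffOn ℝ 1 (deriv η₁) (Set.Ioi 0) :=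
      hη₁C2.deriv_of_isOpen hopen (by norm_num)
    have hC2 : ContDiffOn ℝ 1 (deriv η₂) (Set.Ioi 0) :=
      hη₂C2.deriv_of_isOpen hopen (by norm_num)
    have hd₁' : HasDerivAt (deriv η₁) (deriv (deriv η₁) r) r :=
      ((hC1.differentiableOn one_ne_zero).differentiableAt (hopen.mem_nhds hr)).hasDerivAt
    have hd₂' : HasDerivAt (deriv η₂) (deriv (deriv η₂) r) r :=
      ((hC2.differentiableOn one_ne_zero).differentiableAt (hopen.mem_nhds hr)).hasDerivAt
    have hpow : HasDerivAt (fun x : ℝ => x ^ (N - 1))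
        ((N - 1 : ℕ) * r ^ (N - 1 - 1)) r := hasDerivAt_pow (N - 1) r
    have hW : HasDerivAt W
        ((N - 1 : ℕ) * r ^ (N - 1 - 1) * (η₁ r * deriv η₂ r - η₂ r * deriv η₁ r)
          + r ^ (N - 1) *
            (deriv η₁ r * deriv η₂ r + η₁ r * deriv (deriv η₂) r
              - (deriv η₂ r * deriv η₁ r + η₂ r * deriv (deriv η₁) r))) r :=
      hpow.mul ((hd₁.mul hd₂').sub (hd₂.mul hd₁'))
    convert hW using 1
    have e₁ : deriv (deriv η₁) r
        = -(((N : ℝ) - 1) / r * deriv η₁ r) - V r * η₁ r - lam₁ * η₁ r / r ^ 2 := by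
      have := heq₁ r hr; linarith
    have e₂ : deriv (deriv η₂) r
        = -(((N : ℝ) - 1) / r * deriv η₂ r) - V r * η₂ r - lam₂ * η₂ r / r ^ 2 := by
      have := heq₂ r hr; linarith
    have hcast : ((N - 1 : ℕ) : ℝ) = (N : ℝ) - 1 := by
      have : (1:ℕ) ≤ N := by omega
      push_cast [Nat.cast_sub this]; ring
    have hpow1 : r ^ (N - 1) = r ^ (N - 1 - 1) * r := by
      rw [← pow_succ]; congr 1; omega
    have hrpoweq : r ^ (N - 1) / r ^ 2 = r ^ ((N : ℝ) - 3) := by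
      rw [← Real.rpow_natCast r (N - 1), ← Real.rpow_natCast r 2,
        ← Real.rpow_sub hr0]
      congr 1
      have : (1:ℕ) ≤ N := by omega
      push_cast [Nat.cast_sub this]; ring
    rw [e₁, e₂, hcast, hpow1]
    have : c * f r = (lam₁ - lam₂) * (η₁ r * η₂ r) * (r ^ (N - 1) / r ^ 2) := by
      rw [hrpoweq]; simp [hc, hf]; ring
    rw [hpow1] at this
    rw [this]
    field_simp
    ring
  -- eventual comparison of rn and Rn
  have hev : ∀ᶠ n in atTop, rn n < Rn n := by
    have h1 : ∀ᶠ n in atTop, rn n < 1 :=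
      hrn.eventually_lt_const (by norm_num)
    have h2 : ∀ᶠ n in atTop, (1:ℝ) ≤ Rn n := hRn.eventually_ge_atTop 1
    filter_upwards [h1, h2] with n a b; linarith
  -- FTC on [rn n, Rn n]
  have hftc : ∀ᶠ n in atTop,
      c * ∫ r in Set.Ioc (rn n) (Rn n), f r = W (Rn n) - W (rn n) := by
    filter_upwards [hev] with n hlt
    have hsub : Set.uIcc (rn n) (Rn n) ⊆ Set.Ioi 0 := by
      rw [Set.uIcc_of_le hlt.le]
      intro x hx
      exact lt_of_lt_of_le (hrn_pos n) hx.1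
    have hint' : IntervalIntegrable (fun r => c * f r) volume (rn n) (Rn n) :=
      ((hfcont.mono hsub).const_smul c).intervalIntegrable
    have := intervalIntegral.integral_eq_sub_of_hasDerivAt
      (f := W) (f' := fun r => c * f r)
      (fun x hx => key x (hsub hx)) hint'
    rw [intervalIntegral.integral_of_le hlt.le] at this
    rw [← this, MeasureTheory.integral_const_mul]
  -- the truncated integrals converge to the full integral
  have hIlim : Tendsto (fun n => ∫ r in Set.Ioc (rn n) (Rn n), f r) atTop
      (nhds (∫ r in Set.Ioi (0:ℝ), f r)) := by
    have hmeas : ∀ n, MeasurableSet (Set.Ioc (rn n) (Rn n)) := fun n => measurableSet_Ioc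
    have hsubn : ∀ n, Set.Ioc (rn n) (Rn n) ⊆ Set.Ioi 0 := fun n x hx =>
      lt_of_lt_of_le (hrn_pos n) hx.1.le
    have heq1 : ∀ n, (∫ r in Set.Ioc (rn n) (Rn n), f r)
        = ∫ r, (Set.Ioc (rn n) (Rn n)).indicator f r := fun n =>
      (MeasureTheory.integral_indicator (hmeas n)).symm
    have heq2 : (∫ r in Set.Ioi (0:ℝ), f r) = ∫ r, (Set.Ioi (0:ℝ)).indicator f r :=
      (MeasureTheory.integral_indicator measurableSet_Ioi).symm
    simp only [heq1, heq2]
    apply MeasureTheory.tendsto_integral_of_dominated_convergence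
      (bound := (Set.Ioi (0:ℝ)).indicator (fun r => ‖f r‖))
    · intro n
      exact ((hint.mono_set (hsubn n)).integrable_indicator (hmeas n)).aestronglyMeasurable
    · exact MeasureTheory.IntegrableOn.integrable_indicator hint.norm measurableSet_Ioi
    · intro n
      filter_upwards with r
      by_cases hr : r ∈ Set.Ioc (rn n) (Rn n)
      · rw [Set.indicator_of_mem hr, Set.indicator_of_mem (hsubn n hr)]
      · rw [Set.indicator_of_notMem hr]
        simp only [norm_zero]
        exact Set.indicator_nonneg (fun x _ => norm_nonneg _) r
    · filter_upwards with r
      by_cases hr : r ∈ Set.Ioi (0:ℝ)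
      · rw [Set.indicator_of_mem hr]
        have h1 : ∀ᶠ n in atTop, rn n < r := hrn.eventually_lt_const hr
        have h2 : ∀ᶠ n in atTop, r ≤ Rn n := hRn.eventually_ge_atTop r
        apply Tendsto.congr' _ tendsto_const_nhds
        filter_upwards [h1, h2] with n a b
        exact (Set.indicator_of_mem (Set.mem_Ioc.mpr ⟨a, b⟩) f).symm
      · rw [Set.indicator_of_notMem hr]
        apply Tendsto.congr' _ tendsto_const_nhds
        filter_upwards with n
        rw [Set.indicator_of_notMem (fun h => hr (hsubn n h))]
  -- combine limits
  have hlim1 : Tendsto (fun n => c * ∫ r in Set.Ioc (rn n) (Rn n), f r) atTop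
      (nhds (c * ∫ r in Set.Ioi (0:ℝ), f r)) := hIlim.const_mul c
  have hlim2 : Tendsto (fun n => W (Rn n) - W (rn n)) atTop (nhds 0) := by
    simpa using hWinf.sub hW0
  have hzero : c * (∫ r in Set.Ioi (0:ℝ), f r) = 0 :=
    tendsto_nhds_unique (hlim1.congr' hftc) hlim2
  have hneg : c * (∫ r in Set.Ioi (0:ℝ), f r) < 0 :=
    mul_neg_of_neg_of_pos hcneg hpos
  exact absurd hzero hneg.ne
end

section
/- Let N ≥ 2 and let u be a sign-changing radial C² solution of −Δu = |u|^{p-1}u in the unit ball B with u = 0 on ∂B, with exactly one interior zero r_p ∈ (0,1), u > 0 on (0, r_p), u < 0 on (r_p, 1), u'(r_p) < 0 and u'(1) > 0. Then η(r) := u'(r) satisfies the equation r²(−η'' − ((N−1)/r)η' − p|u|^{p−1}η) = −(N−1)η on (1/n, 1) for any n with 1/n < r_p, with η(1/n) < 0, η(1) > 0, and η has a unique zero in (1/n, 1). -/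
open Real Set Filter Topology

lemma hasDerivAt_abs_rpow_mul (p : ℝ) (hp : 1 < p) (x : ℝ) :
    HasDerivAt (fun y : ℝ => |y| ^ (p - 1) * y) (p * |x| ^ (p - 1)) x := by
  rcases lt_trichotomy x 0 with hx | hx | hx
  · have h1 : HasDerivAt (fun y : ℝ => -((-y) ^ p)) (p * |x| ^ (p - 1)) x := by
      have h2 : HasDerivAt (fun y : ℝ => (-y) ^ p) ((p * (-x) ^ (p - 1)) * (-1)) x :=
        (Real.hasDerivAt_rpow_const (p := p) (Or.inl (by linarith : -x ≠ 0))).comp x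
          (hasDerivAt_neg x)
      have := h2.neg
      simpa [abs_of_neg hx, Pi.neg_def] using this
    refine h1.congr_of_eventuallyEq ?_
    filter_upwards [eventually_lt_nhds hx] with y hy
    have habs : |y| = -y := abs_of_neg hy
    have h3 : (-y) ^ (p - 1) * (-y) = (-y) ^ p := by
      rw [← Real.rpow_add_one (by linarith : -y ≠ 0)]
      norm_num
    rw [habs]
    nlinarith [h3]
  · subst hx
    rw [hasDerivAt_iff_tendsto_slope]
    have habs : Tendsto (fun y : ℝ => |y| ^ (p - 1)) (𝓝[≠] (0:ℝ)) (𝓝 (p * |(0:ℝ)| ^ (p - 1))) := by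
      have : Tendsto (fun y : ℝ => |y| ^ (p - 1)) (𝓝 (0:ℝ)) (𝓝 0) := by
        have hc : ContinuousAt (fun z : ℝ => z ^ (p-1)) |(0:ℝ)| := by
          simpa using Real.continuousAt_rpow_const 0 (p-1) (Or.inr (by linarith))
        have h2 := (hc.comp continuous_abs.continuousAt (x := (0:ℝ))).tendsto
        simpa [Function.comp_def, Real.zero_rpow (show p - 1 ≠ 0 by linarith)] using h2
      simpa [Real.zero_rpow (show p - 1 ≠ 0 by linarith)] using this.mono_left nhdsWithin_le_nhds
    refine habs.congr' ?_
    filter_upwards [self_mem_nhdsWithin] with y hy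
    have hy0 : y ≠ 0 := hy
    simp [slope, Real.zero_rpow (show p - 1 ≠ 0 by linarith), mul_comm, mul_div_assoc, hy0]
  · have h1 : HasDerivAt (fun y : ℝ => y ^ p) (p * x ^ (p - 1)) x :=
      Real.hasDerivAt_rpow_const (Or.inl (ne_of_gt hx))
    have h1' : HasDerivAt (fun y : ℝ => y ^ p) (p * |x| ^ (p - 1)) x := by
      rwa [abs_of_pos hx]
    refine h1'.congr_of_eventuallyEq ?_
    filter_upwards [eventually_gt_nhds hx] with y hy
    rw [abs_of_pos hy, Real.rpow_sub_one (ne_of_gt hy)]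
    field_simp


/-- for a sign-changing radial solution `u` of the Lane–Emden
equation in the unit ball with a unique interior zero `r_p`, the derivative
`η = u'` solves `r²(−η'' − ((N−1)/r)η' − p|u|^{p−1}η) = −(N−1)η` on `(1/n,1)`
for any `n` with `1/n < r_p`, with `η(1/n) < 0`, `η(1) > 0` and a unique zero
in `(1/n,1)`. -/
theorem stmt10 (N : ℕ) (hN : 2 ≤ N) (p : ℝ) (hp : 1 < p)
    (u : ℝ → ℝ) (hu : ContDiffOn ℝ 2 u (Set.Ioo 0 1))
    (hode : ∀ r ∈ Set.Ioo (0 : ℝ) 1,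
      deriv (deriv u) r + ((N : ℝ) - 1) / r * deriv u r + |u r| ^ (p - 1) * u r = 0)
    (hu1 : u 1 = 0)
    (rp : ℝ) (hrp : rp ∈ Set.Ioo (0 : ℝ) 1) (hurp : u rp = 0)
    (hupos : ∀ r ∈ Set.Ioo (0 : ℝ) rp, 0 < u r)
    (huneg : ∀ r ∈ Set.Ioo rp (1 : ℝ), u r < 0)
    (hHopf : deriv u rp < 0) (hHopf1 : 0 < deriv u 1) :
    ∀ n : ℕ, 0 < n → (1 : ℝ) / n < rp →
      (∀ r ∈ Set.Ioo ((1 : ℝ) / n) 1,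
        r ^ 2 * (-(deriv (deriv (deriv u)) r)
          - ((N : ℝ) - 1) / r * deriv (deriv u) r
          - p * |u r| ^ (p - 1) * deriv u r)
        = -((N : ℝ) - 1) * deriv u r) ∧
      deriv u ((1 : ℝ) / n) < 0 ∧ 0 < deriv u 1 ∧
      (∃! z : ℝ, z ∈ Set.Ioo ((1 : ℝ) / n) 1 ∧ deriv u z = 0) := by
  intro n hn hn2
  have hrp0 : 0 < rp := hrp.1
  have hrp1 : rp < 1 := hrp.2
  have hn0 : (0:ℝ) < 1 / n := by
    have : (0:ℝ) < (n:ℝ) := by exact_mod_cast hn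
    positivity
  set M : ℕ := N - 2 with hM
  have hNM : (N : ℝ) - 1 = (M : ℝ) + 1 := by
    have h : N = M + 2 := by omega
    rw [h]; push_cast; ring
  -- differentiability
  have hu' : ContDiffOn ℝ 1 (deriv u) (Set.Ioo 0 1) :=
    hu.deriv_of_isOpen isOpen_Ioo (by norm_num)
  have hdiff1 : ∀ r ∈ Set.Ioo (0:ℝ) 1, HasDerivAt u (deriv u r) r := fun r hr =>
    ((hu.differentiableOn (by norm_num)).differentiableAt (isOpen_Ioo.mem_nhds hr)).hasDerivAt
  have hdiff2 : ∀ r ∈ Set.Ioo (0:ℝ) 1, HasDerivAt (deriv u) (deriv (deriv u) r) r := fun r hr =>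
    ((hu'.differentiableOn one_ne_zero).differentiableAt (isOpen_Ioo.mem_nhds hr)).hasDerivAt
  have hdu'cont : ContinuousOn (deriv u) (Set.Ioo 0 1) := hu'.continuousOn
  -- the function G r = r^(M+1) * u'(r)
  set G : ℝ → ℝ := fun t => t ^ (M + 1) * deriv u t with hGdef
  have hGderiv : ∀ r ∈ Set.Ioo (0:ℝ) 1,
      HasDerivAt G (-(r ^ (M+1) * (|u r| ^ (p-1) * u r))) r := by
    intro r hr
    have h1 : HasDerivAt (fun t : ℝ => t ^ (M+1)) (((M:ℝ)+1) * r ^ M) r := by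
      have := hasDerivAt_pow (M+1) r
      simpa using this
    have h2 := h1.mul (hdiff2 r hr)
    have hr0 : (0:ℝ) < r := hr.1
    have h3 : deriv (deriv u) r = -(((N:ℝ)-1)/r * deriv u r + |u r| ^ (p-1) * u r) := by
      have := hode r hr; linarith
    have hval : ((M:ℝ)+1) * r ^ M * deriv u r + r ^ (M+1) * deriv (deriv u) r
        = -(r ^ (M+1) * (|u r| ^ (p-1) * u r)) := by
      rw [h3, hNM]
      field_simp
      ring
    exact hval ▸ h2
  have hGcont : ContinuousOn G (Set.Ioo (0:ℝ) 1) :=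
    (continuous_pow (M+1)).continuousOn.mul hdu'cont
  -- G strictly decreasing on [a,b] ⊆ (0, rp]
  have hGanti : ∀ a b : ℝ, 0 < a → b ≤ rp → StrictAntiOn G (Set.Icc a b) := by
    intro a b ha hb
    apply strictAntiOn_of_deriv_neg (convex_Icc a b)
    · exact hGcont.mono (fun x hx => ⟨lt_of_lt_of_le ha hx.1,
        lt_of_le_of_lt (le_trans hx.2 hb) hrp1⟩)
    · intro x hx
      rw [interior_Icc] at hx
      have hx0 : 0 < x := lt_trans ha hx.1
      have hx01 : x ∈ Set.Ioo (0:ℝ) 1 := ⟨hx0, lt_of_lt_of_le (lt_of_lt_of_le hx.2 hb) (le_of_lt hrp1)⟩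
      rw [(hGderiv x hx01).deriv]
      have hux : 0 < u x := hupos x ⟨hx0, lt_of_lt_of_le hx.2 hb⟩
      have hpw : 0 < x ^ (M+1) := pow_pos hx0 _
      have habs : 0 < |u x| ^ (p-1) := Real.rpow_pos_of_pos (abs_pos.mpr (ne_of_gt hux)) _
      have := mul_pos hpw (mul_pos habs hux)
      linarith
  -- G strictly increasing on (rp, 1)
  have hGmono : StrictMonoOn G (Set.Ioo rp 1) := by
    apply strictMonoOn_of_deriv_pos (convex_Ioo rp 1)
    · exact hGcont.mono (fun x hx => ⟨lt_trans hrp0 hx.1, hx.2⟩)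
    · intro x hx
      rw [interior_Ioo] at hx
      have hx01 : x ∈ Set.Ioo (0:ℝ) 1 := ⟨lt_trans hrp0 hx.1, hx.2⟩
      rw [(hGderiv x hx01).deriv]
      have hux : u x < 0 := huneg x hx
      have hpw : 0 < x ^ (M+1) := pow_pos hx01.1 _
      have habs : 0 < |u x| ^ (p-1) := Real.rpow_pos_of_pos (abs_pos.mpr (ne_of_lt hux)) _
      have := mul_neg_of_pos_of_neg hpw (mul_neg_of_pos_of_neg habs hux)
      linarith
  -- Part B : u' < 0 on (0, rp)
  have hB : ∀ s ∈ Set.Ioo (0:ℝ) rp, deriv u s < 0 := by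
    intro s hs
    by_contra hcon
    push_neg at hcon
    set t : ℝ := s / 2 with htdef
    have ht0 : 0 < t := by simp [htdef]; linarith [hs.1]
    have hts : t < s := by simp [htdef]; linarith [hs.1]
    have hGt : 0 < G t := by
      have h1 : G s < G t := (hGanti t s ht0 (le_of_lt hs.2))
        ⟨le_rfl, le_of_lt hts⟩ ⟨le_of_lt hts, le_rfl⟩ hts
      have hGs : 0 ≤ G s := mul_nonneg (pow_nonneg (le_of_lt (lt_trans ht0 hts)) _) hcon
      linarith
    have hkey : ∀ r ∈ Set.Ioo (0:ℝ) t, G t / r < deriv u r := by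
      intro r hr
      have h1 : G t < G r := (hGanti r t hr.1 (by linarith [hs.2]))
        ⟨le_rfl, le_of_lt hr.2⟩ ⟨le_of_lt hr.2, le_rfl⟩ hr.2
      have hrpow : 0 < r ^ (M+1) := pow_pos hr.1 _
      have h2 : G t / r ^ (M+1) < deriv u r := by
        rw [div_lt_iff₀ hrpow]
        calc G t < G r := h1
          _ = deriv u r * r ^ (M+1) := mul_comm _ _
      have hle : r ^ (M+1) ≤ r := by
        have := pow_le_pow_of_le_one (le_of_lt hr.1)
          (le_of_lt (by linarith [hr.2, hts, hs.2, hrp1] : r < 1)) (show 1 ≤ M+1 by omega)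
        simpa using this
      have h3 : G t / r ≤ G t / r ^ (M+1) :=
        div_le_div_of_nonneg_left (le_of_lt hGt) hrpow hle
      linarith
    set c : ℝ := G t with hcdef
    set ψ : ℝ → ℝ := fun r => u r - c * Real.log r with hψdef
    have hψmono : ∀ a, 0 < a → a < t → StrictMonoOn ψ (Set.Icc a t) := by
      intro a ha hat
      have hsub : Set.Icc a t ⊆ Set.Ioo (0:ℝ) 1 := fun x hx =>
        ⟨lt_of_lt_of_le ha hx.1, by nlinarith [hx.2, hts, hs.2, hrp1]⟩
      apply strictMonoOn_of_deriv_pos (convex_Icc a t)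
      · refine (hu.continuousOn.mono hsub).sub (continuousOn_const.mul ?_)
        exact Real.continuousOn_log.mono (fun x hx => ne_of_gt (lt_of_lt_of_le ha hx.1))
      · intro x hx
        rw [interior_Icc] at hx
        have hx0 : 0 < x := lt_trans ha hx.1
        have hx01 : x ∈ Set.Ioo (0:ℝ) 1 := hsub ⟨le_of_lt hx.1, le_of_lt hx.2⟩
        have hd : HasDerivAt ψ (deriv u x - c * x⁻¹) x :=
          (hdiff1 x hx01).sub ((Real.hasDerivAt_log (ne_of_gt hx0)).const_mul c)
        rw [hd.deriv]
        have hk := hkey x ⟨hx0, hx.2⟩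
        rw [div_eq_mul_inv] at hk
        linarith
    set t' : ℝ := t / 2 with ht'def
    have ht'0 : 0 < t' := by simp [ht'def]; linarith
    have ht't : t' < t := by simp [ht'def]; linarith
    set X : ℝ := (-(ψ t') - 1) / c with hXdef
    set r0 : ℝ := min (t'/2) (Real.exp X) with hr0def
    have hr0pos : 0 < r0 := lt_min (by linarith) (Real.exp_pos X)
    have hr0lt : r0 < t' := lt_of_le_of_lt (min_le_left _ _) (by linarith)
    have h1 : ψ r0 < ψ t' := (hψmono r0 hr0pos (lt_trans hr0lt ht't))
      ⟨le_rfl, le_of_lt (lt_trans hr0lt ht't)⟩ ⟨le_of_lt hr0lt, le_of_lt ht't⟩ hr0lt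
    have hlog : Real.log r0 ≤ X := (Real.log_le_iff_le_exp hr0pos).mpr (min_le_right _ _)
    have h2 : c * Real.log r0 ≤ c * X := mul_le_mul_of_nonneg_left hlog (le_of_lt hGt)
    have h3 : c * X = -(ψ t') - 1 := by
      rw [hXdef]; field_simp
    have hu0 : 0 < u r0 := hupos r0 ⟨hr0pos, by linarith [hs.2, hr0lt, ht't, hts]⟩
    have hψr0 : ψ r0 = u r0 - c * Real.log r0 := rfl
    have hψcontr : u r0 < 0 := by
      have := h1
      rw [hψr0] at this
      linarith
    linarith
  -- existence of zero of u' in (rp, 1)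
  have hs2 : (rp+1)/2 ∈ Set.Ioo rp 1 := ⟨by linarith, by linarith⟩
  have hucont1 : ContinuousAt u 1 :=
    (differentiableAt_of_deriv_ne_zero (ne_of_gt hHopf1)).continuousAt
  have hucontIcc : ContinuousOn u (Set.Icc ((rp+1)/2) 1) := by
    intro x hx
    rcases eq_or_lt_of_le hx.2 with h | h
    · rw [h]; exact hucont1.continuousWithinAt
    · exact (hu.continuousOn.continuousAt (isOpen_Ioo.mem_nhds
        ⟨by linarith [hx.1], h⟩)).continuousWithinAt
  obtain ⟨cc, hcc, hccd⟩ := exists_deriv_eq_slope u (show (rp+1)/2 < 1 by linarith)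
    hucontIcc ((hu.differentiableOn (by norm_num)).mono
      (fun x hx => ⟨by linarith [hx.1], hx.2⟩))
  have hcc1 : 0 < deriv u cc := by
    rw [hccd, hu1]
    have := huneg ((rp+1)/2) hs2
    apply div_pos <;> linarith
  have hrpc : rp < cc := lt_trans hs2.1 hcc.1
  have hcont' : ContinuousOn (deriv u) (Set.Icc rp cc) :=
    hdu'cont.mono (fun x hx => ⟨lt_of_lt_of_le hrp0 hx.1, lt_of_le_of_lt hx.2 hcc.2⟩)
  obtain ⟨z, hz, hz0⟩ := intermediate_value_Ioo (le_of_lt hrpc) hcont' (⟨hHopf, hcc1⟩ :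
    (0:ℝ) ∈ Set.Ioo (deriv u rp) (deriv u cc))
  have hz1 : z < 1 := lt_trans hz.2 hcc.2
  have hzmem : z ∈ Set.Ioo ((1:ℝ)/n) 1 := ⟨lt_trans hn2 hz.1, hz1⟩
  refine ⟨?_, hB (1/n) ⟨hn0, hn2⟩, hHopf1, ?_⟩
  · -- the ODE for η = u'
    intro r hr
    have hr01 : r ∈ Set.Ioo (0:ℝ) 1 := ⟨lt_trans hn0 hr.1, hr.2⟩
    have hr0 : 0 < r := hr01.1
    have hEq : deriv (deriv u) =ᶠ[𝓝 r]
        (fun x => -(((N:ℝ)-1)/x * deriv u x + |u x| ^ (p-1) * u x)) := by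
      filter_upwards [isOpen_Ioo.mem_nhds hr01] with x hx
      have := hode x hx; linarith
    have h3eq : deriv (deriv (deriv u)) r
        = deriv (fun x => -(((N:ℝ)-1)/x * deriv u x + |u x| ^ (p-1) * u x)) r :=
      hEq.deriv_eq
    have hder1 : HasDerivAt (fun t : ℝ => ((N:ℝ)-1)/t * deriv u t)
        (((N:ℝ)-1) * -(r^2)⁻¹ * deriv u r + ((N:ℝ)-1)/r * deriv (deriv u) r) r := by
      have h := ((hasDerivAt_inv (ne_of_gt hr0)).const_mul ((N:ℝ)-1)).mul (hdiff2 r hr01)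
      simpa [div_eq_mul_inv, mul_assoc, Pi.mul_def] using h
    have hder2 : HasDerivAt (fun t : ℝ => |u t| ^ (p-1) * u t)
        (p * |u r| ^ (p-1) * deriv u r) r := by
      have h := (hasDerivAt_abs_rpow_mul p hp (u r)).comp r (hdiff1 r hr01)
      simpa [Function.comp_def, mul_assoc] using h
    have hφ : HasDerivAt (fun x : ℝ => -(((N:ℝ)-1)/x * deriv u x + |u x| ^ (p-1) * u x))
        (-((((N:ℝ)-1) * -(r^2)⁻¹ * deriv u r + ((N:ℝ)-1)/r * deriv (deriv u) r)
          + p * |u r| ^ (p-1) * deriv u r)) r := (hder1.add hder2).neg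
    rw [h3eq, hφ.deriv]
    field_simp
    ring
  · -- unique zero
    refine ⟨z, ⟨hzmem, hz0⟩, ?_⟩
    rintro y ⟨hy, hy0⟩
    have hyrp : rp < y := by
      by_contra h
      push_neg at h
      rcases eq_or_lt_of_le h with he | hl
      · exact absurd (he ▸ hy0) (ne_of_lt hHopf)
      · exact absurd hy0 (ne_of_lt (hB y ⟨lt_trans hn0 hy.1, hl⟩))
    have hGy : G y = G z := by
      simp only [hGdef, hy0, hz0, mul_zero]
    exact hGmono.injOn ⟨hyrp, hy.2⟩ ⟨hz.1, hz1⟩ hGy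
end

section
/- Let p > 1 and let u : (0, r₀) → (0,∞) be C² satisfying u'' + ((N−1)/r)u' + u^p = 0 with N = 2, u > 0 on (0, r₀). Define f(r) = p u(r)^{p-1} r². Then any critical point c ∈ (0, r₀) of f satisfies −u'(c) = 2u(c)/((p−1)c), and at any such critical point f''(c) < 0; consequently f has at most one critical point in (0, r₀), which is a strict maximum. -/
open Real

lemma aux_no_two {g G : ℝ → ℝ} {a b : ℝ} (hab : a < b)
    (hd : ∀ x ∈ Set.Icc a b, HasDerivAt g (G x) x)
    (hneg : ∀ x ∈ Set.Icc a b, g x = 0 → G x < 0)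
    (ha : g a = 0) (hb : g b = 0) : False := by
  have hcont : ContinuousOn g (Set.Icc a b) :=
    fun x hx => (hd x hx).continuousAt.continuousWithinAt
  -- find a' ∈ Ioo a b with g a' < 0
  have hGa : G a < 0 := hneg a (Set.left_mem_Icc.2 hab.le) ha
  have hslopea : Filter.Tendsto (slope g a) (nhdsWithin a (Set.Ioi a)) (nhds (G a)) :=
    (hasDerivAt_iff_tendsto_slope.1 (hd a (Set.left_mem_Icc.2 hab.le))).mono_left
      (nhdsWithin_mono _ (fun x hx => (Set.mem_Ioi.1 hx).ne'))
  have h1 : ∀ᶠ x in nhdsWithin a (Set.Ioi a), slope g a x < 0 :=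
    hslopea.eventually_lt_const hGa
  have h2 : ∀ᶠ x in nhdsWithin a (Set.Ioi a), x ∈ Set.Ioo a b :=
    Filter.eventually_of_mem (Ioo_mem_nhdsGT_of_mem ⟨le_refl a, hab⟩) (fun x hx => hx)
  obtain ⟨a', hs1, hs2⟩ := (h1.and h2).exists
  have ha'neg : g a' < 0 := by
    rw [slope_def_field, ha, sub_zero] at hs1
    have h3 : 0 < a' - a := sub_pos.2 hs2.1
    by_contra h
    push_neg at h
    exact absurd (div_nonneg h h3.le) (not_le.2 hs1)
  -- the set of zeros in [a', b]
  set S : Set ℝ := Set.Icc a' b ∩ g ⁻¹' {0} with hS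
  have hsub : Set.Icc a' b ⊆ Set.Icc a b := Set.Icc_subset_Icc hs2.1.le le_rfl
  have hSclosed : IsClosed S :=
    (hcont.mono hsub).preimage_isClosed_of_isClosed isClosed_Icc isClosed_singleton
  have hSne : S.Nonempty := ⟨b, Set.right_mem_Icc.2 hs2.2.le, hb⟩
  have hSbdd : BddBelow S := ⟨a', fun x hx => hx.1.1⟩
  set c := sInf S with hc
  have hcS : c ∈ S := hSclosed.csInf_mem hSne hSbdd
  have hgc : g c = 0 := hcS.2
  have hca' : a' < c := lt_of_le_of_ne hcS.1.1 (fun h => absurd hgc (h ▸ ha'neg.ne))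
  have hcmem : c ∈ Set.Icc a b := hsub hcS.1
  have hGc : G c < 0 := hneg c hcmem hgc
  -- find x₀ ∈ Ioo a' c with g x₀ > 0
  have hslopec : Filter.Tendsto (slope g c) (nhdsWithin c (Set.Iio c)) (nhds (G c)) :=
    (hasDerivAt_iff_tendsto_slope.1 (hd c hcmem)).mono_left
      (nhdsWithin_mono _ (fun x hx => (Set.mem_Iio.1 hx).ne))
  have h1' : ∀ᶠ x in nhdsWithin c (Set.Iio c), slope g c x < 0 :=
    hslopec.eventually_lt_const hGc
  have h2' : ∀ᶠ x in nhdsWithin c (Set.Iio c), x ∈ Set.Ioo a' c :=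
    Filter.eventually_of_mem (Ioo_mem_nhdsLT_of_mem ⟨hca', le_refl c⟩) (fun x hx => hx)
  obtain ⟨x₀, ht1, ht2⟩ := (h1'.and h2').exists
  have hx₀pos : 0 < g x₀ := by
    rw [slope_def_field, hgc, sub_zero] at ht1
    have h3 : x₀ - c < 0 := sub_neg.2 ht2.2
    by_contra h
    push_neg at h
    exact absurd (div_nonneg_iff.2 (Or.inr ⟨h, h3.le⟩)) (not_le.2 ht1)
  -- IVT gives a zero in [a', x₀], contradicting minimality of c
  have hivt := intermediate_value_Icc ht2.1.le
      (hcont.mono (Set.Icc_subset_Icc hs2.1.le (ht2.2.le.trans hcS.1.2)))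
  obtain ⟨z, hz, hz0⟩ := hivt (Set.mem_Icc.2 ⟨ha'neg.le, hx₀pos.le⟩)
  have : c ≤ z := csInf_le hSbdd ⟨⟨hz.1, hz.2.trans (ht2.2.le.trans hcS.1.2)⟩, hz0⟩
  exact absurd (this.trans hz.2) (not_le.2 ht2.2)

/-- N = 2: for a positive `C²` solution of
`u'' + u'/r + u^p = 0` on `(0,r₀)` and `f(r) = p u(r)^{p−1} r²`, every critical
point `c` of `f` satisfies `−u'(c) = 2u(c)/((p−1)c)` and `f''(c) < 0`; hence `f`
has at most one critical point on `(0,r₀)`. -/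
theorem stmt11 (p r₀ : ℝ) (hp : 1 < p) (hr₀ : 0 < r₀)
    (u : ℝ → ℝ) (huC2 : ContDiffOn ℝ 2 u (Set.Ioo 0 r₀))
    (hupos : ∀ r ∈ Set.Ioo (0 : ℝ) r₀, 0 < u r)
    (hode : ∀ r ∈ Set.Ioo (0 : ℝ) r₀,
      deriv (deriv u) r + (2 - 1 : ℝ) / r * deriv u r + u r ^ p = 0)
    (f : ℝ → ℝ) (hf : ∀ r : ℝ, f r = p * u r ^ (p - 1) * r ^ 2) :
    (∀ c ∈ Set.Ioo (0 : ℝ) r₀, deriv f c = 0 →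
      -deriv u c = 2 * u c / ((p - 1) * c) ∧ deriv (deriv f) c < 0) ∧
    (∀ c₁ ∈ Set.Ioo (0 : ℝ) r₀, ∀ c₂ ∈ Set.Ioo (0 : ℝ) r₀,
      deriv f c₁ = 0 → deriv f c₂ = 0 → c₁ = c₂) := by
  have hp1 : (0:ℝ) < p - 1 := by linarith
  have hopen : IsOpen (Set.Ioo (0:ℝ) r₀) := isOpen_Ioo
  have hdu : ∀ r ∈ Set.Ioo (0:ℝ) r₀, HasDerivAt u (deriv u r) r := by
    intro r hr
    exact ((huC2.contDiffAt (hopen.mem_nhds hr)).differentiableAt (by norm_num)).hasDerivAt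
  have hcd1 : ContDiffOn ℝ 1 (deriv u) (Set.Ioo 0 r₀) :=
    huC2.deriv_of_isOpen hopen (by norm_num)
  have hdu' : ∀ r ∈ Set.Ioo (0:ℝ) r₀, HasDerivAt (deriv u) (deriv (deriv u) r) r := by
    intro r hr
    exact ((hcd1.contDiffAt (hopen.mem_nhds hr)).differentiableAt (by norm_num)).hasDerivAt
  set g : ℝ → ℝ := fun r => (p - 1) * deriv u r * r + 2 * u r with hgdef
  set G : ℝ → ℝ := fun r => (p - 1) * (deriv (deriv u) r * r + deriv u r) + 2 * deriv u r
    with hGdef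
  have hgG : ∀ r ∈ Set.Ioo (0:ℝ) r₀, HasDerivAt g (G r) r := by
    intro r hr
    have h1 : HasDerivAt (fun y => (p - 1) * deriv u y * y)
        (((p - 1) * deriv (deriv u) r) * r + ((p - 1) * deriv u r) * 1) r :=
      HasDerivAt.mul ((hdu' r hr).const_mul (p - 1)) (hasDerivAt_id' (x := r))
    have h2 := h1.add ((hdu r hr).const_mul 2)
    refine h2.congr_deriv ?_
    simp only [hGdef]; ring
  -- derivative of f
  have hDf : ∀ r ∈ Set.Ioo (0:ℝ) r₀, HasDerivAt f (p * u r ^ (p - 2) * r * g r) r := by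
    intro r hr
    have hu0 := hupos r hr
    have h1 : HasDerivAt (fun y => u y ^ (p - 1))
        (deriv u r * (p - 1) * u r ^ (p - 1 - 1)) r :=
      (hdu r hr).rpow_const (Or.inl hu0.ne')
    have h2 := (h1.const_mul p).mul (hasDerivAt_pow 2 r)
    have hfe : f = fun y => p * u y ^ (p - 1) * y ^ 2 := funext hf
    rw [hfe]
    refine h2.congr_deriv ?_
    have e1 : p - 1 - 1 = p - 2 := by ring
    have e2 : u r ^ (p - 1) = u r ^ (p - 2) * u r := by
      rw [show p - 1 = (p - 2) + 1 by ring, Real.rpow_add hu0, Real.rpow_one]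
    rw [e1, e2]
    simp only [hgdef]
    push_cast
    ring
  have hderivf : ∀ r ∈ Set.Ioo (0:ℝ) r₀, deriv f r = p * u r ^ (p - 2) * r * g r :=
    fun r hr => (hDf r hr).deriv
  have hcoef : ∀ r ∈ Set.Ioo (0:ℝ) r₀, 0 < p * u r ^ (p - 2) * r := by
    intro r hr
    have := Real.rpow_pos_of_pos (hupos r hr) (p - 2)
    have hp0 : (0:ℝ) < p := by linarith
    exact mul_pos (mul_pos hp0 this) hr.1
  have hcrit : ∀ c ∈ Set.Ioo (0:ℝ) r₀, deriv f c = 0 → g c = 0 := by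
    intro c hc h0
    rw [hderivf c hc] at h0
    rcases mul_eq_zero.1 h0 with h | h
    · exact absurd h (hcoef c hc).ne'
    · exact h
  -- G < 0 at zeros of g
  have hGneg : ∀ c ∈ Set.Ioo (0:ℝ) r₀, g c = 0 → G c < 0 := by
    intro c hc hg0
    have hc0 := hc.1
    have hA := hupos c hc
    have hup : 0 < u c ^ p := Real.rpow_pos_of_pos hA p
    have hodec := hode c hc
    have hg0' : (p - 1) * deriv u c * c + 2 * u c = 0 := hg0
    have hB : deriv u c < 0 := by
      have h1 : (p - 1) * deriv u c * c = -(2 * u c) := by linarith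
      nlinarith [mul_pos hp1 hc0]
    have hC : deriv (deriv u) c * c = -deriv u c - u c ^ p * c := by
      have h2 : deriv (deriv u) c + c⁻¹ * deriv u c + u c ^ p = 0 := by
        norm_num at hodec; linarith
      field_simp at h2
      linarith
    have : G c = -((p - 1) * (u c ^ p) * c) + 2 * deriv u c := by
      simp only [hGdef]
      rw [mul_add, hC]
      ring
    rw [this]
    nlinarith [mul_pos (mul_pos hp1 hup) hc0]
  -- second derivative at critical points
  have hsecond : ∀ c ∈ Set.Ioo (0:ℝ) r₀, g c = 0 → deriv (deriv f) c < 0 := by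
    intro c hc hg0
    have hu0 := hupos c hc
    have heq : deriv f =ᶠ[nhds c] fun r => p * u r ^ (p - 2) * r * g r :=
      Filter.eventuallyEq_of_mem (hopen.mem_nhds hc) hderivf
    have hH : HasDerivAt (fun y => p * u y ^ (p - 2) * y)
        ((p * (deriv u c * (p - 2) * u c ^ (p - 2 - 1))) * c + (p * u c ^ (p - 2)) * 1) c :=
      HasDerivAt.mul (((hdu c hc).rpow_const (Or.inl hu0.ne')).const_mul p)
        (hasDerivAt_id' (x := c))
    have h2 := hH.mul (hgG c hc)
    have h3 : deriv (deriv f) c =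
        ((p * (deriv u c * (p - 2) * u c ^ (p - 2 - 1))) * c + (p * u c ^ (p - 2)) * 1) * g c
          + (p * u c ^ (p - 2) * c) * G c := by
      rw [heq.deriv_eq]
      exact h2.deriv
    rw [h3, hg0, mul_zero, zero_add]
    exact mul_neg_of_pos_of_neg (hcoef c hc) (hGneg c hc hg0)
  constructor
  · intro c hc h0
    have hg0 := hcrit c hc h0
    constructor
    · have hg0' : (p - 1) * deriv u c * c + 2 * u c = 0 := hg0
      have hne : (p - 1) * c ≠ 0 := (mul_pos hp1 hc.1).ne'
      field_simp
      rw [eq_div_iff hc.1.ne']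
      linarith
    · exact hsecond c hc hg0
  · intro c₁ hc₁ c₂ hc₂ h₁ h₂
    have hg₁ := hcrit c₁ hc₁ h₁
    have hg₂ := hcrit c₂ hc₂ h₂
    by_contra hne
    have key : ∀ a b : ℝ, a ∈ Set.Ioo (0:ℝ) r₀ → b ∈ Set.Ioo (0:ℝ) r₀ → a < b →
        g a = 0 → g b = 0 → False := by
      intro a b haI hbI hab hga hgb
      have hsub : Set.Icc a b ⊆ Set.Ioo (0:ℝ) r₀ := fun x hx =>
        ⟨lt_of_lt_of_le haI.1 hx.1, lt_of_le_of_lt hx.2 hbI.2⟩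
      exact aux_no_two hab (fun x hx => hgG x (hsub hx))
        (fun x hx => hGneg x (hsub hx)) hga hgb
    rcases lt_trichotomy c₁ c₂ with h | h | h
    · exact key c₁ c₂ hc₁ hc₂ h hg₁ hg₂
    · exact hne h
    · exact key c₂ c₁ hc₂ hc₁ h hg₂ hg₁
end
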